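/- Let (F_n) be a linear-like semiring family of graphs and let G and H be finite simple graphs. If there exists d ≥ 1 and a graph homomorphism G ⋉ d → H ⋉ d (i.e., a fractional graph homomorphism from G to H), then η_F^frac(G) ≤ η_F^frac(H). -/

import Mathlib

open SimpleGraph

universe u v

/-- The join `G + H` of two simple graphs. -/
def graphJoin {α : Type u} {β : Type v} (G : SimpleGraph α) (H : SimpleGraph β) :
    SimpleGraph (α ⊕ β) where
  Adj x y :=
    match x, y with
    | Sum.inl a, Sum.inl a' => G.Adj a a'
    | Sum.inr b, Sum.inr b' => H.Adj b b'
    | Sum.inl _, Sum.inr _ => True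
    | Sum.inr _, Sum.inl _ => True
  symm := by
    constructor
    rintro (a | b) (a' | b') h
    · exact h.symm
    · trivial
    · trivial
    · exact h.symm
  loopless := by
    constructor
    rintro (a | b) h
    · exact G.loopless.irrefl a h
    · exact H.loopless.irrefl b h

/-- The disjunctive product `G * H`. -/
def disjProd {α : Type u} {β : Type v} (G : SimpleGraph α) (H : SimpleGraph β) :
    SimpleGraph (α × β) where
  Adj p q := G.Adj p.1 q.1 ∨ H.Adj p.2 q.2
  symm := ⟨fun p q h => h.imp (fun h' => h'.symm) (fun h' => h'.symm)⟩
  loopless := ⟨fun p h => h.elim (fun h' => G.loopless.irrefl p.1 h') (fun h' => H.loopless.irrefl p.2 h')⟩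

/-- The lexicographic product `G ⋉ H`. -/
def lexProd {α : Type u} {β : Type v} (G : SimpleGraph α) (H : SimpleGraph β) :
    SimpleGraph (α × β) where
  Adj p q := G.Adj p.1 q.1 ∨ (p.1 = q.1 ∧ H.Adj p.2 q.2)
  symm := ⟨fun p q h => h.imp (fun h' => h'.symm) (fun h' => ⟨h'.1.symm, h'.2.symm⟩)⟩
  loopless := ⟨fun p h => h.elim (fun h' => G.loopless.irrefl p.1 h') (fun h' => H.loopless.irrefl p.2 h'.2)⟩

/-- The `d`-fold blowup `G ⋉ d`, i.e. the lexicographic product `G ⋉ K_d`. -/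
def blowup {α : Type u} (G : SimpleGraph α) (d : ℕ) : SimpleGraph (α × Fin d) :=
  lexProd G (⊤ : SimpleGraph (Fin d))

/-- The `d`-fractionalization `G/d`: the graph of `d`-cliques of `G`, with two
`d`-cliques adjacent iff they are disjoint and pairwise adjacent. -/
def fracGraph {α : Type u} (G : SimpleGraph α) (d : ℕ) :
    SimpleGraph {S : Finset α // S.card = d ∧ G.IsClique (S : Set α)} where
  Adj S T := S ≠ T ∧ Disjoint S.val T.val ∧ ∀ a ∈ S.val, ∀ b ∈ T.val, G.Adj a b
  symm := by
    constructor
    rintro S T ⟨hne, hd, hadj⟩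
    exact ⟨hne.symm, hd.symm, fun b hb a ha => (hadj a ha b hb).symm⟩
  loopless := ⟨fun S h => h.1 rfl⟩

/-- The `n`-fold disjunctive power `G^{*n}`. -/
def disjPow {α : Type u} (G : SimpleGraph α) (n : ℕ) :
    SimpleGraph (Fin n → α) where
  Adj f g := ∃ i, G.Adj (f i) (g i)
  symm := ⟨fun f g ⟨i, h⟩ => ⟨i, h.symm⟩⟩
  loopless := ⟨fun f ⟨i, h⟩ => G.loopless.irrefl _ h⟩

/-- A semiring family of graphs. -/
structure SemiringFamily where
  V : ℕ → Type u
  F : ∀ n, SimpleGraph (V n)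
  isEmpty_zero : IsEmpty (V 0)
  nonempty_one : Nonempty (V 1)
  add_hom : ∀ n m : ℕ, Nonempty (graphJoin (F n) (F m) →g F (n + m))
  mul_hom : ∀ n m : ℕ, Nonempty (disjProd (F n) (F m) →g F (n * m))

/-- The `F`-number: the least `n` such that `G → F_n`. -/
noncomputable def etaF (F : SemiringFamily.{u}) {α : Type v} (G : SimpleGraph α) : ℕ :=
  sInf {n : ℕ | Nonempty (G →g F.F n)}

/-- The fractional `F`-number. -/
noncomputable def etaFrac (F : SemiringFamily.{u}) {α : Type v} (G : SimpleGraph α) : ℝ :=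
  sInf {x : ℝ | ∃ n d : ℕ, 1 ≤ d ∧ Nonempty (G →g fracGraph (F.F n) d) ∧ x = (n : ℝ) / d}

/-- The asymptotic `F`-number. -/
noncomputable def etaAsymp (F : SemiringFamily.{u}) {α : Type v} (G : SimpleGraph α) : ℝ :=
  sInf {x : ℝ | ∃ n : ℕ, 1 ≤ n ∧ x = (etaF F (disjPow G n) : ℝ) ^ ((1 : ℝ) / n)}

/-- The orthogonal complement of a set of vertices. -/
def perp {α : Type u} (G : SimpleGraph α) (S : Set α) : Set α :=
  {v | ∀ s ∈ S, G.Adj v s}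

/-- A flat is a set of vertices with `S^{⊥⊥} = S`. -/
def IsFlat {α : Type u} (G : SimpleGraph α) (S : Set α) : Prop :=
  perp G (perp G S) = S

/-- Homomorphic equivalence of two graphs. -/
def HomEquiv {α : Type u} {β : Type v} (G : SimpleGraph α) (H : SimpleGraph β) : Prop :=
  Nonempty (G →g H) ∧ Nonempty (H →g G)

/-- A linear-like semiring family: every flat of `F_n` induces a subgraph with some
clique number `k`, homomorphically equivalent to `F_k`. -/
structure LinearLikeFamily extends SemiringFamily where
  linearLike : ∀ n (S : Set (V n)), IsFlat (F n) S →
    ∃ k : ℕ, (∃ s : Finset S, ((F n).induce S).IsNClique k s) ∧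
      (∀ s : Finset S, ¬ ((F n).induce S).IsNClique (k + 1) s) ∧
      HomEquiv ((F n).induce S) (F k)

universe w

section Aux

variable {α' : Type*} {β' : Type*} {γ' : Type*}

/-- Adjacency constructor for the blowup. -/
lemma blowup_adj_of {α' : Type*} {G : SimpleGraph α'} {e : ℕ} {v v' : α'} {i j : Fin e}
    (h : G.Adj v v' ∨ (v = v' ∧ i ≠ j)) : (blowup G e).Adj (v, i) (v', j) := by
  rcases h with h | ⟨h1, h2⟩
  · exact Or.inl h
  · exact Or.inr ⟨h1, by simpa using h2⟩

/-- From a hom into the `e`-fractionalization we get a hom from the `e`-blowup. -/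
noncomputable def blowupHomOfFracHom {H : SimpleGraph β'} {F : SimpleGraph γ'} {e : ℕ}
    (g : H →g fracGraph F e) : blowup H e →g F := by
  refine ⟨fun p => ((Finset.equivFinOfCardEq (g p.1).2.1).symm p.2 : γ'), ?_⟩
  rintro ⟨w, i⟩ ⟨w', j⟩ (hww' | ⟨rfl, hij⟩)
  · obtain ⟨-, -, hadj⟩ := g.map_adj hww'
    exact hadj _ (Finset.coe_mem _) _ (Finset.coe_mem _)
  · have hij' : i ≠ j := by simpa using hij
    have hclique := (g w).2.2
    refine hclique ?_ ?_ ?_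
    · exact Finset.coe_mem _
    · exact Finset.coe_mem _
    · intro hEq
      exact hij' ((Finset.equivFinOfCardEq (g w).2.1).symm.injective (Subtype.ext hEq))

/-- From a hom out of the `e`-blowup we get a hom into the `e`-fractionalization. -/
noncomputable def fracHomOfBlowupHom {G : SimpleGraph α'} {F : SimpleGraph γ'} {e : ℕ}
    (he : 1 ≤ e) (f : blowup G e →g F) : G →g fracGraph F e := by
  classical
  have hinj : ∀ v : α', Function.Injective (fun i : Fin e => f (v, i)) := by
    intro v i j hij
    by_contra hne
    exact (f.map_adj (blowup_adj_of (Or.inr ⟨rfl, hne⟩))).ne hij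
  have hmem : ∀ v, (Finset.image (fun i : Fin e => f (v, i)) Finset.univ).card = e ∧
      F.IsClique (Finset.image (fun i : Fin e => f (v, i)) Finset.univ : Set γ') := by
    intro v
    constructor
    · rw [Finset.card_image_of_injective _ (hinj v)]; simp
    · intro a ha b hb hab
      simp only [Finset.coe_image, Finset.coe_univ, Set.image_univ, Set.mem_range] at ha hb
      obtain ⟨i, rfl⟩ := ha
      obtain ⟨j, rfl⟩ := hb
      exact f.map_adj (blowup_adj_of (Or.inr ⟨rfl, fun h => hab (by rw [h])⟩))
  refine ⟨fun v => ⟨_, hmem v⟩, ?_⟩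
  intro v v' hvv'
  have hadj : ∀ a ∈ Finset.image (fun i : Fin e => f (v, i)) Finset.univ,
      ∀ b ∈ Finset.image (fun i : Fin e => f (v', i)) Finset.univ, F.Adj a b := by
    intro a ha b hb
    simp only [Finset.mem_image, Finset.mem_univ, true_and] at ha hb
    obtain ⟨i, rfl⟩ := ha; obtain ⟨j, rfl⟩ := hb
    exact f.map_adj (Or.inl hvv')
  have hdisj : Disjoint (Finset.image (fun i : Fin e => f (v, i)) Finset.univ)
      (Finset.image (fun i : Fin e => f (v', i)) Finset.univ) := by
    rw [Finset.disjoint_left]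
    intro a ha ha'
    exact F.loopless.irrefl a (hadj a ha a ha')
  refine ⟨?_, hdisj, hadj⟩
  intro hEq
  have hne : (Finset.image (fun i : Fin e => f (v, i)) Finset.univ).Nonempty := by
    rw [← Finset.card_pos, (hmem v).1]; omega
  obtain ⟨a, ha⟩ := hne
  have h2 : (Finset.image (fun i : Fin e => f (v, i)) Finset.univ)
      = (Finset.image (fun i : Fin e => f (v', i)) Finset.univ) := Subtype.ext_iff.mp hEq
  exact F.loopless.irrefl a (hadj a ha a (h2 ▸ ha))

/-- The complete graph `K_m` admits a homomorphism into `F_m`. -/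
noncomputable def cliqueHom (F : SemiringFamily.{u}) : ∀ m, (⊤ : SimpleGraph (Fin m)) →g F.F m
  | 0 => ⟨fun i => i.elim0, fun {a} _ _ => a.elim0⟩
  | (m + 1) => by
    have j := (F.add_hom m 1).some
    have v1 := F.nonempty_one.some
    have ih := cliqueHom F m
    refine j.comp ⟨fun i => if h : (i : ℕ) < m then Sum.inl (ih ⟨(i : ℕ), h⟩)
      else Sum.inr v1, ?_⟩
    intro a b hab
    have hab' : a ≠ b := by simpa using hab
    by_cases ha : (a : ℕ) < m <;> by_cases hb : (b : ℕ) < m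
    · simp only [dif_pos ha, dif_pos hb]
      exact ih.map_adj (by
        simp only [top_adj, ne_eq, Fin.mk.injEq]
        intro hEq
        exact hab' (Fin.ext hEq))
    · simp only [dif_pos ha, dif_neg hb]
      trivial
    · simp only [dif_neg ha, dif_pos hb]
      trivial
    · exfalso
      have h1 : (a : ℕ) = m := by omega
      have h2 : (b : ℕ) = m := by omega
      exact hab' (Fin.ext (h1.trans h2.symm))

end Aux

/-- The fractional `F`-number of a linear-like family is monotone under
fractional graph homomorphisms. -/
theorem linearLike_etaFrac_frac_monotone (F : LinearLikeFamily.{u}) {α : Type v} {β : Type w}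
    [Fintype α] [Fintype β] (G : SimpleGraph α) (H : SimpleGraph β)
    (h : ∃ d : ℕ, 1 ≤ d ∧ Nonempty (blowup G d →g blowup H d)) :
    etaFrac F.toSemiringFamily G ≤ etaFrac F.toSemiringFamily H := by
  obtain ⟨d, hd, ⟨f⟩⟩ := h
  have hbdd : BddBelow {x : ℝ | ∃ n e : ℕ, 1 ≤ e ∧
      Nonempty (G →g fracGraph (F.F n) e) ∧ x = (n : ℝ) / e} := by
    refine ⟨0, ?_⟩
    rintro y ⟨n', e', he', -, rfl⟩
    positivity
  apply le_csInf
  · -- the set for `H` is nonempty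
    set m := Fintype.card β with hm
    have κ := cliqueHom F.toSemiringFamily m
    have h1 : H →g (⊤ : SimpleGraph (Fin m)) := by
      refine ⟨Fintype.equivFin β, ?_⟩
      intro a b hab
      simpa using fun hEq => hab.ne ((Fintype.equivFin β).injective hEq)
    have h2 : blowup H 1 →g H := by
      refine ⟨fun p => p.1, ?_⟩
      rintro ⟨w, i⟩ ⟨w', j⟩ (hww' | ⟨rfl, hij⟩)
      · exact hww'
      · exact absurd (Subsingleton.elim i j) (by simpa using hij)
    exact ⟨(m : ℝ) / 1, m, 1, le_refl 1,
      ⟨fracHomOfBlowupHom (le_refl 1) (κ.comp (h1.comp h2))⟩, by norm_num⟩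
  · rintro x ⟨n, e, he, ⟨g⟩, rfl⟩
    have g' : blowup H e →g F.F n := blowupHomOfFracHom g
    have κ : (⊤ : SimpleGraph (Fin d)) →g F.F d := cliqueHom F.toSemiringFamily d
    have μ := (F.mul_hom n d).some
    -- χ : blowup G (d*e) → blowup H (d*e)
    have χ : blowup G (d * e) →g blowup H (d * e) := by
      refine ⟨fun p => ((f (p.1, (finProdFinEquiv.symm p.2).1)).1,
        finProdFinEquiv ((f (p.1, (finProdFinEquiv.symm p.2).1)).2,
          (finProdFinEquiv.symm p.2).2)), ?_⟩
      rintro ⟨v, k⟩ ⟨v', k'⟩ hk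
      dsimp only
      have step : ∀ (hadj : (blowup H d).Adj (f (v, (finProdFinEquiv.symm k).1))
          (f (v', (finProdFinEquiv.symm k').1))),
          (blowup H (d * e)).Adj
            ((f (v, (finProdFinEquiv.symm k).1)).1,
              finProdFinEquiv ((f (v, (finProdFinEquiv.symm k).1)).2,
                (finProdFinEquiv.symm k).2))
            ((f (v', (finProdFinEquiv.symm k').1)).1,
              finProdFinEquiv ((f (v', (finProdFinEquiv.symm k').1)).2,
                (finProdFinEquiv.symm k').2)) := by
        rintro (hH | ⟨hw, hl⟩)
        · exact Or.inl hH
        · refine Or.inr ⟨hw, ?_⟩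
          simp only [top_adj, ne_eq] at hl ⊢
          intro hEq
          exact hl (congrArg Prod.fst (finProdFinEquiv.injective hEq))
      rcases hk with hvv' | ⟨rfl, hkk'⟩
      · exact step (f.map_adj (Or.inl hvv'))
      · have hkk'' : k ≠ k' := by simpa using hkk'
        by_cases h1 : (finProdFinEquiv.symm k).1 = (finProdFinEquiv.symm k').1
        · have h2 : (finProdFinEquiv.symm k).2 ≠ (finProdFinEquiv.symm k').2 := by
            intro h2
            exact hkk'' (finProdFinEquiv.symm.injective (Prod.ext h1 h2))
          refine Or.inr ⟨?_, ?_⟩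
          · rw [h1]
          · rw [h1]
            simp only [top_adj, ne_eq]
            intro hEq
            exact h2 (Prod.ext_iff.mp (finProdFinEquiv.injective hEq)).2
        · exact step (f.map_adj (Or.inr ⟨rfl, by simpa using h1⟩))
    -- ψ : blowup H (d*e) → disjProd (F n) (F d)
    have ψ : blowup H (d * e) →g disjProd (F.F n) (F.F d) := by
      refine ⟨fun p => (g' (p.1, (finProdFinEquiv.symm p.2).2), κ (finProdFinEquiv.symm p.2).1),
        ?_⟩
      rintro ⟨w, k⟩ ⟨w', k'⟩ (hww' | ⟨rfl, hkk'⟩)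
      · exact Or.inl (g'.map_adj (Or.inl hww'))
      · have hkk'' : k ≠ k' := by simpa using hkk'
        by_cases h2 : (finProdFinEquiv.symm k).2 = (finProdFinEquiv.symm k').2
        · have h1 : (finProdFinEquiv.symm k).1 ≠ (finProdFinEquiv.symm k').1 := by
            intro h1
            exact hkk'' (finProdFinEquiv.symm.injective (Prod.ext h1 h2))
          exact Or.inr (κ.map_adj (by simpa using h1))
        · exact Or.inl (g'.map_adj (Or.inr ⟨rfl, by simpa using h2⟩))
    have Φ : blowup G (d * e) →g F.F (n * d) := μ.comp (ψ.comp χ)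
    have hde : 1 ≤ d * e := Nat.one_le_iff_ne_zero.mpr (by positivity)
    have hmem : (n : ℝ) / e ∈ {x : ℝ | ∃ n' e' : ℕ, 1 ≤ e' ∧
        Nonempty (G →g fracGraph (F.F n') e') ∧ x = (n' : ℝ) / e'} := by
      refine ⟨n * d, d * e, hde, ⟨fracHomOfBlowupHom hde Φ⟩, ?_⟩
      have hd0 : (d : ℝ) ≠ 0 := by positivity
      have he0 : (e : ℝ) ≠ 0 := by
        have : 0 < e := he
        positivity
      push_cast
      field_simp
    exact csInf_le hbdd hmem
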